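/- Let f be a continuous strictly concave function on [m,M] with m < M, and let μ_f = (f(M)-f(m))/(M-m), ν_f = (Mf(m)-mf(M))/(M-m), β_f = max_{m ≤ t ≤ M} (f(t) - μ_f t - ν_f). Then for every self-adjoint operator A on a Hilbert space H with spectrum in [m,M] and every unital positive linear map Φ from B(H) to B(K), one has β_f·I_K + Φ(f(A)) ≥ f(Φ(A)). -/

import Mathlib

open scoped Topology

section Aux

variable {𝒜 : Type*} [CStarAlgebra 𝒜]


/-- cfc of an affine function. -/
lemma cfc_affine (μ ν : ℝ) (a : 𝒜) (ha : IsSelfAdjoint a) :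
    cfc (fun t : ℝ => μ * t + ν) a = μ • a + ν • (1 : 𝒜) := by
  rw [cfc_add_const ν (fun t => μ * t) a (by fun_prop) ha, cfc_const_mul_id μ a ha,
    Algebra.algebraMap_eq_smul_one]

end Aux

theorem reverse_choi_davis_jensen_diff
    {𝒜 ℬ : Type*} [CStarAlgebra 𝒜] [PartialOrder 𝒜] [StarOrderedRing 𝒜]
    [CStarAlgebra ℬ] [PartialOrder ℬ] [StarOrderedRing ℬ]
    (m M : ℝ) (hmM : m < M) (f : ℝ → ℝ)
    (hf_cont : ContinuousOn f (Set.Icc m M))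
    (hf_concave : StrictConcaveOn ℝ (Set.Icc m M) f)
    (β : ℝ)
    (hβ : IsGreatest ((fun t => f t - (f M - f m) / (M - m) * t -
        (M * f m - m * f M) / (M - m)) '' Set.Icc m M) β)
    (Φ : 𝒜 →ₗ[ℂ] ℬ) (hΦ1 : Φ 1 = 1) (hΦpos : ∀ a : 𝒜, 0 ≤ a → 0 ≤ Φ a)
    (A : 𝒜) (hA : IsSelfAdjoint A) (hspec : spectrum ℝ A ⊆ Set.Icc m M) :
    cfc f (Φ A) ≤ β • (1 : ℬ) + Φ (cfc f A) := by
  set μ : ℝ := (f M - f m) / (M - m) with hμ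
  set ν : ℝ := (M * f m - m * f M) / (M - m) with hν
  have hMm : (0:ℝ) < M - m := sub_pos.2 hmM
  -- chord lies below f on [m, M]
  have hchord : ∀ t ∈ Set.Icc m M, μ * t + ν ≤ f t := by
    intro t ht
    obtain ⟨htm, htM⟩ := ht
    have h1 : (0:ℝ) ≤ (M - t) / (M - m) := div_nonneg (by linarith) hMm.le
    have h2 : (0:ℝ) ≤ (t - m) / (M - m) := div_nonneg (by linarith) hMm.le
    have hsum : (M - t) / (M - m) + (t - m) / (M - m) = 1 := by
      field_simp; ring
    have := hf_concave.concaveOn.2 (Set.left_mem_Icc.2 hmM.le)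
      (Set.right_mem_Icc.2 hmM.le) h1 h2 hsum
    have hcomb : (M - t) / (M - m) * m + (t - m) / (M - m) * M = t := by
      field_simp; ring
    rw [smul_eq_mul, smul_eq_mul, smul_eq_mul, smul_eq_mul, hcomb] at this
    calc μ * t + ν = (M - t) / (M - m) * f m + (t - m) / (M - m) * f M := by
          rw [hμ, hν]; field_simp; ring
      _ ≤ f t := this
  -- operator chord inequality for A
  have hcfcA : μ • A + ν • (1 : 𝒜) ≤ cfc f A := by
    rw [← cfc_affine μ ν A hA]
    exact cfc_mono (fun x hx => hchord x (hspec hx)) (by fun_prop)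
      (hf_cont.mono hspec)
  -- Φ is monotone
  have hΦmono : ∀ a b : 𝒜, a ≤ b → Φ a ≤ Φ b := fun a b hab => by
    have := hΦpos (b - a) (sub_nonneg.2 hab)
    rw [map_sub] at this
    exact sub_nonneg.1 this
  -- Φ commutes with real smul
  have hΦsmul : ∀ (r : ℝ) (a : 𝒜), Φ (r • a) = r • Φ a := fun r a => by
    rw [← algebraMap_smul ℂ r a, map_smul, algebraMap_smul]
  -- bounds on A
  have hA_ge : m • (1 : 𝒜) ≤ A := by
    rw [← Algebra.algebraMap_eq_smul_one]
    exact (algebraMap_le_iff_le_spectrum hA).2 fun x hx => (hspec hx).1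
  have hA_le : A ≤ M • (1 : 𝒜) := by
    rw [← Algebra.algebraMap_eq_smul_one]
    exact (le_algebraMap_iff_spectrum_le hA).2 fun x hx => (hspec hx).2
  -- bounds on Φ A
  have hΦA_ge : m • (1 : ℬ) ≤ Φ A := by
    have := hΦmono _ _ hA_ge
    rwa [hΦsmul, hΦ1] at this
  have hΦA_le : Φ A ≤ M • (1 : ℬ) := by
    have := hΦmono _ _ hA_le
    rwa [hΦsmul, hΦ1] at this
  -- Φ A is self-adjoint
  have hΦA_sa : IsSelfAdjoint (Φ A) := by
    have h0 : (0 : ℬ) ≤ Φ A - m • 1 := sub_nonneg.2 hΦA_ge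
    have h1 : IsSelfAdjoint (Φ A - m • 1) := IsSelfAdjoint.of_nonneg h0
    have h2 : IsSelfAdjoint (m • (1 : ℬ)) := by
      rw [← Algebra.algebraMap_eq_smul_one]
      exact IsSelfAdjoint.algebraMap ℬ (star_trivial m)
    simpa using h1.add h2
  -- spectrum of Φ A is in [m, M]
  have hspecΦ : spectrum ℝ (Φ A) ⊆ Set.Icc m M := by
    intro x hx
    constructor
    · refine (algebraMap_le_iff_le_spectrum hΦA_sa).1 ?_ x hx
      rwa [Algebra.algebraMap_eq_smul_one]
    · refine (le_algebraMap_iff_spectrum_le hΦA_sa).1 ?_ x hx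
      rwa [Algebra.algebraMap_eq_smul_one]
  -- upper bound on f over spectrum of Φ A
  have h1 : cfc f (Φ A) ≤ cfc (fun t : ℝ => μ * t + (ν + β)) (Φ A) := by
    refine cfc_mono (fun x hx => ?_) (hf_cont.mono hspecΦ) (by fun_prop)
    have := hβ.2 ⟨x, hspecΦ hx, rfl⟩
    simp only [← hμ, ← hν] at this
    linarith
  rw [cfc_affine μ (ν + β) (Φ A) hΦA_sa] at h1
  have h2 : μ • Φ A + ν • (1 : ℬ) ≤ Φ (cfc f A) := by
    have := hΦmono _ _ hcfcA
    rwa [map_add, hΦsmul, hΦsmul, hΦ1] at this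
  calc cfc f (Φ A) ≤ μ • Φ A + (ν + β) • (1 : ℬ) := h1
    _ = β • (1 : ℬ) + (μ • Φ A + ν • (1 : ℬ)) := by
        rw [add_smul]; abel
    _ ≤ β • (1 : ℬ) + Φ (cfc f A) := by
        exact add_le_add_right h2 _
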